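/- Let K be a field of characteristic 0 and let E be a finitely generated module over the polynomial ring K[u]. Suppose there is an additive map ∇ : E → E satisfying the Leibniz rule ∇(f·e) = f·∇(e) + f′·e for all f ∈ K[u] and e ∈ E, where f′ denotes the formal derivative of f. Then the torsion submodule of E is zero and E is a free K[u]-module. -/

import Mathlib

open Polynomial

/-- Let `K` be a field of characteristic `0` and `E` a finitely generated
module over the polynomial ring `K[u]`. If there is an additive map `D : E → E` satisfying
the Leibniz rule `D (f • e) = f • D e + f' • e` (where `f'` is the formal derivative),
then the torsion submodule of `E` is zero and `E` is a free `K[u]`-module. -/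
theorem stmt0 (K : Type*) [Field K] [CharZero K]
    (E : Type*) [AddCommGroup E] [Module (Polynomial K) E]
    [Module.Finite (Polynomial K) E]
    (D : E →+ E)
    (hD : ∀ (f : Polynomial K) (e : E),
      D (f • e) = f • D e + (Polynomial.derivative f) • e) :
    Submodule.torsion (Polynomial K) E = ⊥ ∧ Module.Free (Polynomial K) E := by
  set T := Submodule.torsion (Polynomial K) E with hT
  -- D-stability of torsion
  have hstab : ∀ e ∈ T, D e ∈ T := by
    rintro e ⟨⟨f, hf⟩, hfe⟩
    refine ⟨⟨f * f, mul_mem hf hf⟩, ?_⟩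
    have hfe' : f • e = 0 := hfe
    have h1 : f • D e = -(derivative f • e) := by
      have := hD f e
      rw [hfe'] at this
      simp at this
      exact eq_neg_of_add_eq_zero_left this.symm
    show (f * f) • D e = 0
    rw [mul_smul, h1, smul_neg, smul_comm, hfe']
    simp
  haveI : Module.Finite (Polynomial K) T := by
    have : IsNoetherian (Polynomial K) E := inferInstance
    exact Module.Finite.iff_fg.mpr (IsNoetherian.noetherian T)
  -- annihilator is nonzero
  have htor : Module.IsTorsion (Polynomial K) T := Submodule.torsion_isTorsion
  have hann := Submodule.annihilator_top_inter_nonZeroDivisors (R := Polynomial K) (M := T) htor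
  obtain ⟨r, hrI, hr0⟩ := hann
  set I := (⊤ : Submodule (Polynomial K) T).annihilator with hI
  have hIne : I ≠ ⊥ := by
    intro h
    rw [h] at hrI
    exact nonZeroDivisors.ne_zero hr0 hrI
  obtain ⟨g, hg⟩ := (inferInstance : Submodule.IsPrincipal I).principal
  have hg0 : g ≠ 0 := by
    rintro rfl
    exact hIne (hg.trans (Ideal.span_singleton_eq_bot.mpr rfl))
  have hgann : ∀ t ∈ T, g • t = 0 := by
    intro t ht
    have hgI : g ∈ I := hg ▸ Ideal.subset_span rfl
    have := Submodule.mem_annihilator.mp hgI ⟨t, ht⟩ Submodule.mem_top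
    exact congrArg Subtype.val this
  have hg' : derivative g ∈ I := by
    rw [Submodule.mem_annihilator]
    rintro ⟨t, ht⟩ -
    have h1 : D (g • t) = g • D t + derivative g • t := hD g t
    rw [hgann t ht, hgann (D t) (hstab t ht), map_zero, zero_add] at h1
    exact Subtype.ext h1.symm
  rw [hg] at hg'
  have hg'' : g ∣ derivative g := Ideal.mem_span_singleton.mp hg'
  have hder : derivative g = 0 := by
    by_contra h
    exact absurd (Polynomial.degree_le_of_dvd hg'' h)
      (not_le_of_gt (Polynomial.degree_derivative_lt hg0))
  have hnd : g.natDegree = 0 := Polynomial.natDegree_eq_zero_of_derivative_eq_zero hder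
  obtain ⟨c, rfl⟩ := Polynomial.natDegree_eq_zero.mp hnd
  have hc : c ≠ 0 := fun h => hg0 (by simp [h])
  have hTbot : T = ⊥ := by
    rw [Submodule.eq_bot_iff]
    intro t ht
    have := hgann t ht
    have h2 : (Polynomial.C c⁻¹ * Polynomial.C c) • t = 0 := by
      rw [mul_smul, this, smul_zero]
    rwa [← Polynomial.C_mul, inv_mul_cancel₀ hc, Polynomial.C_1, one_smul] at h2
  refine ⟨hTbot, ?_⟩
  haveI : Module.IsTorsionFree (Polynomial K) E :=
    Submodule.isTorsionFree_iff_torsion_eq_bot.mpr hTbot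
  infer_instance
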